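/- Let 𝒫 be a family of probability distributions on {0,1}^n and suppose there is an integer r with 0 < r < n such that the number of positive outcomes n_1(Y) equals r almost surely under every P ∈ 𝒫. Then the AUC is a strictly R*-proper scoring function for 𝒫: for every P ∈ 𝒫 and every total preorder ≾ on {1,...,n}, E_P[AUC(Y, ≾)] ≤ E_P[AUC(Y, t)] for all t ∈ R*(P), with equality if and only if ≾ ∈ R*(P). -/

import Mathlib

open scoped BigOperators

/-- A total preorder on `Fin n`: reflexive, transitive and total. -/
structure TotalPreorder (n : ℕ) where
  rel : Fin n → Fin n → Bool
  refl : ∀ i, rel i i = true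
  trans : ∀ i j k, rel i j = true → rel j k = true → rel i k = true
  total : ∀ i j, rel i j = true ∨ rel j i = true

namespace TotalPreorder

/-- The rank vector `ρ_i(≾) = Σ_j (1_{j ≾ i} − 1_{j ≿ i})`. -/
def rho {n : ℕ} (p : TotalPreorder n) (i : Fin n) : ℝ :=
  ∑ j, ((if p.rel j i then (1 : ℝ) else 0) - (if p.rel i j then (1 : ℝ) else 0))

/-- The total preorder induced by a vector `v`: `i ≾ j ↔ v i ≤ v j`. -/
noncomputable def induced {n : ℕ} (v : Fin n → ℝ) : TotalPreorder n where
  rel i j := decide (v i ≤ v j)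
  refl i := by simp
  trans i j k := by
    simp only [decide_eq_true_eq]
    exact le_trans
  total i j := by
    simp only [decide_eq_true_eq]
    exact le_total _ _

/-- `p` is contained in `q` if `i ≾_p j` implies `i ≾_q j`. -/
def contained {n : ℕ} (p q : TotalPreorder n) : Prop :=
  ∀ i j, p.rel i j = true → q.rel i j = true

end TotalPreorder

open TotalPreorder

/-- Expectation of a real-valued function of a binary random vector. -/
noncomputable def pexp {n : ℕ} (P : PMF (Fin n → Bool)) (f : (Fin n → Bool) → ℝ) : ℝ :=
  ∑ y : Fin n → Bool, (P y).toReal * f y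

/-- The marginal functional: `M(P)_i = P[Y_i = 1]`. -/
noncomputable def margin {n : ℕ} (P : PMF (Fin n → Bool)) (i : Fin n) : ℝ :=
  pexp P (fun y => if y i then 1 else 0)

/-- Membership in the weak rank functional `R*(P)`: a total preorder contained in
the preorder induced by the marginal means. -/
def RstarMem {n : ℕ} (P : PMF (Fin n → Bool)) (p : TotalPreorder n) : Prop :=
  p.contained (TotalPreorder.induced (margin P))

/-- Number of positive outcomes. -/
def n1 {n : ℕ} (y : Fin n → Bool) : ℕ := ∑ i, if y i then 1 else 0

/-- Number of negative outcomes. -/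
def n0 {n : ℕ} (y : Fin n → Bool) : ℕ := n - n1 y

/-- AUC weights `α_i(y)`. -/
noncomputable def alpha {n : ℕ} (y : Fin n → Bool) (i : Fin n) : ℝ :=
  if 0 < n1 y ∧ n1 y < n then (if y i then 1 else 0) / ((n0 y : ℝ) * (n1 y : ℝ)) else 0

/-- The empirical area under the ROC curve. -/
noncomputable def AUC {n : ℕ} (y : Fin n → Bool) (p : TotalPreorder n) : ℝ :=
  1 / 2 + 1 / 2 * ∑ i, alpha y i * rho p i

/-- `s` is an `R*`-proper scoring function for the family `F`. -/
def RStarProper {n : ℕ} (s : (Fin n → Bool) → TotalPreorder n → ℝ)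
    (F : Set (PMF (Fin n → Bool))) : Prop :=
  ∀ P ∈ F, ∀ p t : TotalPreorder n, RstarMem P t →
    pexp P (fun y => s y p) ≤ pexp P (fun y => s y t)

/-- `s` is a strictly `R*`-proper scoring function for the family `F`. -/
def StrictlyRStarProper {n : ℕ} (s : (Fin n → Bool) → TotalPreorder n → ℝ)
    (F : Set (PMF (Fin n → Bool))) : Prop :=
  ∀ P ∈ F, ∀ p t : TotalPreorder n, RstarMem P t →
    pexp P (fun y => s y p) ≤ pexp P (fun y => s y t) ∧
      (pexp P (fun y => s y p) = pexp P (fun y => s y t) ↔ RstarMem P p)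

section AuxLemmas

variable {n : ℕ}

lemma pmf_sum_toReal (P : PMF (Fin n → Bool)) : ∑ y, (P y).toReal = 1 := by
  have h1 : ∑ y, P y = 1 := by rw [← P.tsum_coe]; exact (tsum_fintype _).symm
  have h2 := congrArg ENNReal.toReal h1
  rwa [ENNReal.toReal_sum (fun y _ => P.apply_ne_top y)] at h2

lemma pexp_AUC_eq {r : ℕ} (hr0 : 0 < r) (hrn : r < n) (P : PMF (Fin n → Bool))
    (hP : ∀ y, P y ≠ 0 → n1 y = r) (p : TotalPreorder n) :
    pexp P (fun y => AUC y p)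
      = 1 / 2 + 1 / 2 * (((((n - r : ℕ) : ℝ)) * (r : ℝ))⁻¹ *
          ∑ i, margin P i * rho p i) := by
  set a : ℝ := ((n - r : ℕ) : ℝ) with ha
  have haux : ∀ (y : Fin n → Bool) (i : Fin n),
      (P y).toReal * alpha y i
        = (a * (r : ℝ))⁻¹ * ((P y).toReal * (if y i then (1 : ℝ) else 0)) := by
    intro y i
    by_cases hy : P y = 0
    · simp [hy]
    · have hn1 : n1 y = r := hP y hy
      have h0 : n0 y = n - r := by rw [n0, hn1]
      have hcond : 0 < n1 y ∧ n1 y < n := by rw [hn1]; exact ⟨hr0, hrn⟩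
      rw [alpha, if_pos hcond, h0, hn1, ← ha]
      rw [div_eq_mul_inv]; ring
  rw [pexp]
  calc ∑ y, (P y).toReal * AUC y p
      = ∑ y, ((P y).toReal * (1 / 2)
          + 1 / 2 * ∑ i, ((P y).toReal * alpha y i) * rho p i) := by
        refine Finset.sum_congr rfl fun y _ => ?_
        have h : ∑ i, ((P y).toReal * alpha y i) * rho p i
            = (P y).toReal * ∑ i, alpha y i * rho p i := by
          rw [Finset.mul_sum]
          exact Finset.sum_congr rfl fun i _ => by ring
        rw [h, AUC]; ring
    _ = (∑ y, (P y).toReal * (1 / 2))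
          + ∑ y, 1 / 2 * ∑ i, ((P y).toReal * alpha y i) * rho p i :=
        Finset.sum_add_distrib
    _ = 1 / 2 + 1 / 2 * ((a * (r : ℝ))⁻¹ * ∑ i, margin P i * rho p i) := by
        congr 1
        · rw [← Finset.sum_mul, pmf_sum_toReal, one_mul]
        · rw [← Finset.mul_sum]
          congr 1
          rw [Finset.sum_comm, Finset.mul_sum]
          refine Finset.sum_congr rfl fun i _ => ?_
          simp only [haux]
          rw [margin, pexp, Finset.sum_mul, Finset.mul_sum]
          exact Finset.sum_congr rfl fun y _ => by ring

lemma sum_margin_rho_eq (m : Fin n → ℝ) (q : TotalPreorder n) :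
    ∑ i, m i * rho q i
      = ∑ x : Fin n × Fin n,
          (m x.1 - m x.2) * (if q.rel x.2 x.1 then (1 : ℝ) else 0) := by
  rw [Fintype.sum_prod_type]
  simp only [rho, Finset.mul_sum, mul_sub, sub_mul, Finset.sum_sub_distrib]
  congr 1
  exact Finset.sum_comm

lemma term_le_max (m : Fin n → ℝ) (q : TotalPreorder n) (i j : Fin n) :
    (m i - m j) * (if q.rel j i then (1 : ℝ) else 0) ≤ max (m i - m j) 0 := by
  by_cases h : q.rel j i = true
  · rw [if_pos h, mul_one]; exact le_max_left _ _
  · rw [if_neg h, mul_zero]; exact le_max_right _ _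

lemma term_eq_max (m : Fin n → ℝ) (q : TotalPreorder n)
    (hq : ∀ i j, q.rel i j = true → m i ≤ m j) (i j : Fin n) :
    (m i - m j) * (if q.rel j i then (1 : ℝ) else 0) = max (m i - m j) 0 := by
  rcases lt_trichotomy (m i) (m j) with h | h | h
  · have h1 : q.rel j i ≠ true := fun hr => absurd (hq j i hr) (not_le.mpr h)
    rw [if_neg h1, mul_zero]
    exact (max_eq_right (by linarith : m i - m j ≤ 0)).symm
  · have h0 : m i - m j = 0 := by linarith
    rw [h0]; simp
  · have h1 : q.rel i j ≠ true := fun hr => absurd (hq i j hr) (not_le.mpr h)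
    have h2 : q.rel j i = true := (q.total i j).resolve_left h1
    rw [if_pos h2, mul_one]
    exact (max_eq_left (by linarith : (0 : ℝ) ≤ m i - m j)).symm

lemma rstarMem_iff (P : PMF (Fin n → Bool)) (q : TotalPreorder n) :
    RstarMem P q ↔ ∀ i j, q.rel i j = true → margin P i ≤ margin P j := by
  unfold RstarMem TotalPreorder.contained TotalPreorder.induced
  simp only [decide_eq_true_eq]

end AuxLemmas

/-- if the number of positive outcomes is almost surely a constant `r`
with `0 < r < n` under every member of the family, then AUC is strictly `R*`-proper. -/
theorem auc_strictly_Rstar_proper_of_known_sum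
    {n : ℕ} (r : ℕ) (hr0 : 0 < r) (hrn : r < n)
    (F : Set (PMF (Fin n → Bool)))
    (hF : ∀ P ∈ F, ∀ y : Fin n → Bool, P y ≠ 0 → n1 y = r) :
    StrictlyRStarProper (fun y p => AUC y p) F := by
  intro P hPF p t ht
  have hP := hF P hPF
  set m : Fin n → ℝ := margin P with hm
  set c : ℝ := (((n - r : ℕ) : ℝ) * (r : ℝ))⁻¹ with hc
  have hcpos : 0 < c := by
    rw [hc]
    have h1 : (0 : ℝ) < ((n - r : ℕ) : ℝ) :=
      Nat.cast_pos.mpr (Nat.sub_pos_of_lt hrn)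
    have h2 : (0 : ℝ) < (r : ℝ) := Nat.cast_pos.mpr hr0
    positivity
  -- the key expression for the expected AUC
  have key : ∀ q : TotalPreorder n,
      pexp P (fun y => AUC y q)
        = 1 / 2 + 1 / 2 * (c * ∑ x : Fin n × Fin n,
            (m x.1 - m x.2) * (if q.rel x.2 x.1 then (1 : ℝ) else 0)) := by
    intro q
    rw [pexp_AUC_eq hr0 hrn P hP q, sum_margin_rho_eq]
  have ht' : ∀ i j, t.rel i j = true → m i ≤ m j := (rstarMem_iff P t).mp ht
  -- termwise comparison
  have hle : ∀ x ∈ (Finset.univ : Finset (Fin n × Fin n)),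
      (m x.1 - m x.2) * (if p.rel x.2 x.1 then (1 : ℝ) else 0)
        ≤ (m x.1 - m x.2) * (if t.rel x.2 x.1 then (1 : ℝ) else 0) := by
    intro x _
    rw [term_eq_max m t ht' x.1 x.2]
    exact term_le_max m p x.1 x.2
  have hsumle :
      (∑ x : Fin n × Fin n, (m x.1 - m x.2) * (if p.rel x.2 x.1 then (1 : ℝ) else 0))
        ≤ ∑ x : Fin n × Fin n, (m x.1 - m x.2) * (if t.rel x.2 x.1 then (1 : ℝ) else 0) :=
    Finset.sum_le_sum hle
  have hiff :
      (∑ x : Fin n × Fin n, (m x.1 - m x.2) * (if p.rel x.2 x.1 then (1 : ℝ) else 0))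
        = (∑ x : Fin n × Fin n, (m x.1 - m x.2) * (if t.rel x.2 x.1 then (1 : ℝ) else 0))
        ↔ RstarMem P p := by
    rw [Finset.sum_eq_sum_iff_of_le hle]
    constructor
    · intro hall
      rw [rstarMem_iff]
      intro i j hrel
      by_contra hlt
      push_neg at hlt
      have := hall (j, i) (Finset.mem_univ _)
      rw [term_eq_max m t ht' j i] at this
      rw [if_pos hrel, mul_one] at this
      have hmax : max (m j - m i) 0 = 0 :=
        max_eq_right (by linarith : m j - m i ≤ 0)
      rw [hmax] at this
      linarith
    · intro hp x _
      rw [term_eq_max m t ht' x.1 x.2,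
        term_eq_max m p ((rstarMem_iff P p).mp hp) x.1 x.2]
  rw [key p, key t]
  constructor
  · have : c * (∑ x : Fin n × Fin n, (m x.1 - m x.2) * (if p.rel x.2 x.1 then (1 : ℝ) else 0))
        ≤ c * ∑ x : Fin n × Fin n, (m x.1 - m x.2) * (if t.rel x.2 x.1 then (1 : ℝ) else 0) :=
      mul_le_mul_of_nonneg_left hsumle hcpos.le
    linarith
  · constructor
    · intro h
      have h2 : (∑ x : Fin n × Fin n, (m x.1 - m x.2) * (if p.rel x.2 x.1 then (1 : ℝ) else 0))
          = ∑ x : Fin n × Fin n, (m x.1 - m x.2) * (if t.rel x.2 x.1 then (1 : ℝ) else 0) := by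
        have hcne : c ≠ 0 := ne_of_gt hcpos
        have h3 : c * (∑ x : Fin n × Fin n, (m x.1 - m x.2) * (if p.rel x.2 x.1 then (1 : ℝ) else 0))
            = c * ∑ x : Fin n × Fin n, (m x.1 - m x.2) * (if t.rel x.2 x.1 then (1 : ℝ) else 0) := by
          linarith
        exact mul_left_cancel₀ hcne h3
      exact hiff.mp h2
    · intro hp
      rw [hiff.mpr hp]
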